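/- For all integers m and n, BP(m)·BP(n) + BP(m+1)·BP(n+1) = 4·(Q(m+n+4)·1 − Q(m+n+4)·i − P(m+n+4)·j + P(m+n+4)·ij). -/

import Mathlib

open scoped TensorProduct

private lemma keyP (P : ℤ → ℤ) (hP : ∀ n : ℤ, P (n + 2) = 2 * P (n + 1) + P n)
    (hP0 : P 0 = 0) (hP1 : P 1 = 1) (m : ℤ) :
    ∀ n : ℤ, P m * P n + P (m + 1) * P (n + 1) = P (m + n + 1) := by
  suffices h : ∀ n : ℤ, (P m * P n + P (m + 1) * P (n + 1) = P (m + n + 1)) ∧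
      (P m * P (n + 1) + P (m + 1) * P (n + 2) = P (m + n + 2)) from fun n => (h n).1
  intro n
  induction n using Int.induction_on with
  | zero =>
    refine ⟨?_, ?_⟩
    · linear_combination (norm := ring_nf) P m * hP0 + P (m+1) * hP1
    · linear_combination (norm := ring_nf) (P m + 2 * P (m+1)) * hP1 + P (m+1) * hP0
        + P (m+1) * hP 0 - hP m
  | succ k ih =>
    obtain ⟨i1, i2⟩ := ih
    refine ⟨?_, ?_⟩
    · linear_combination (norm := ring_nf) i2
    · linear_combination (norm := ring_nf) P m * hP (k:ℤ) + P (m+1) * hP ((k:ℤ)+1)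
        - hP (m+(k:ℤ)+1) + i1 + 2*i2
  | pred k ih =>
    obtain ⟨i1, i2⟩ := ih
    refine ⟨?_, ?_⟩
    · linear_combination (norm := ring_nf) (-(P m)) * hP (-(k:ℤ)-1) - P (m+1) * hP (-(k:ℤ))
        + i2 - 2*i1 + hP (m-(k:ℤ))
    · linear_combination (norm := ring_nf) i1

private lemma keyQ (P Q : ℤ → ℤ) (hP : ∀ n : ℤ, P (n + 2) = 2 * P (n + 1) + P n)
    (hP0 : P 0 = 0) (hP1 : P 1 = 1)
    (hQ : ∀ n : ℤ, Q (n + 2) = 2 * Q (n + 1) + Q n) (hQ0 : Q 0 = 2) (hQ1 : Q 1 = 2) :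
    ∀ n : ℤ, Q (n + 1) = P n + P (n + 2) := by
  suffices h : ∀ n : ℤ, (Q (n + 1) = P n + P (n + 2)) ∧ (Q (n + 2) = P (n + 1) + P (n + 3))
    from fun n => (h n).1
  intro n
  induction n using Int.induction_on with
  | zero =>
    refine ⟨?_, ?_⟩
    · linear_combination (norm := ring_nf) hQ1 - hP 0 - 2*hP0 - 2*hP1
    · linear_combination (norm := ring_nf) hQ 0 + 2*hQ1 + hQ0 - hP 1 - 2*hP 0 - 6*hP1 - 2*hP0
  | succ k ih =>
    obtain ⟨i1, i2⟩ := ih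
    refine ⟨?_, ?_⟩
    · linear_combination (norm := ring_nf) i2
    · linear_combination (norm := ring_nf) hQ ((k:ℤ)+1) + 2*i2 + i1 - hP ((k:ℤ)+2) - hP (k:ℤ)
  | pred k ih =>
    obtain ⟨i1, i2⟩ := ih
    refine ⟨?_, ?_⟩
    · linear_combination (norm := ring_nf) -hQ (-(k:ℤ)) + i2 - 2*i1 + hP (-(k:ℤ)-1) + hP (-(k:ℤ)+1)
    · linear_combination (norm := ring_nf) i1

noncomputable def bi : ℂ ⊗[ℝ] ℂ := Complex.I ⊗ₜ[ℝ] 1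
noncomputable def bj : ℂ ⊗[ℝ] ℂ := (1 : ℂ) ⊗ₜ[ℝ] Complex.I
noncomputable def bij : ℂ ⊗[ℝ] ℂ := Complex.I ⊗ₜ[ℝ] Complex.I

/-- The bicomplex Pell number `BP n = P n + P (n+1) i + P (n+2) j + P (n+3) ij`. -/
noncomputable def BP (P : ℤ → ℤ) (n : ℤ) : ℂ ⊗[ℝ] ℂ :=
  (P n : ℝ) • (1 : ℂ ⊗[ℝ] ℂ) + (P (n + 1) : ℝ) • bi + (P (n + 2) : ℝ) • bj +
    (P (n + 3) : ℝ) • bij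

private lemma hii : bi * bi = -1 := by
  simp [bi, Algebra.TensorProduct.tmul_mul_tmul, Complex.I_mul_I,
    TensorProduct.neg_tmul, Algebra.TensorProduct.one_def]
private lemma hjj : bj * bj = -1 := by
  simp [bj, Algebra.TensorProduct.tmul_mul_tmul, Complex.I_mul_I,
    TensorProduct.tmul_neg, Algebra.TensorProduct.one_def]
private lemma hkk : bij * bij = 1 := by
  simp [bij, Algebra.TensorProduct.tmul_mul_tmul, Complex.I_mul_I,
    TensorProduct.neg_tmul, TensorProduct.tmul_neg, Algebra.TensorProduct.one_def]
private lemma hij : bi * bj = bij := by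
  simp [bi, bj, bij, Algebra.TensorProduct.tmul_mul_tmul]
private lemma hji : bj * bi = bij := by
  simp [bi, bj, bij, Algebra.TensorProduct.tmul_mul_tmul]
private lemma hik : bi * bij = -bj := by
  simp [bi, bj, bij, Algebra.TensorProduct.tmul_mul_tmul, Complex.I_mul_I,
    TensorProduct.neg_tmul]
private lemma hki : bij * bi = -bj := by
  simp [bi, bj, bij, Algebra.TensorProduct.tmul_mul_tmul, Complex.I_mul_I,
    TensorProduct.neg_tmul]
private lemma hjk : bj * bij = -bi := by
  simp [bi, bj, bij, Algebra.TensorProduct.tmul_mul_tmul, Complex.I_mul_I,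
    TensorProduct.tmul_neg]
private lemma hkj : bij * bj = -bi := by
  simp [bi, bj, bij, Algebra.TensorProduct.tmul_mul_tmul, Complex.I_mul_I,
    TensorProduct.tmul_neg]

theorem bicomplexPell_mul_add_mul (P Q : ℤ → ℤ)
    (hP : ∀ n : ℤ, P (n + 2) = 2 * P (n + 1) + P n) (hP0 : P 0 = 0) (hP1 : P 1 = 1)
    (hQ : ∀ n : ℤ, Q (n + 2) = 2 * Q (n + 1) + Q n) (hQ0 : Q 0 = 2) (hQ1 : Q 1 = 2)
    (m n : ℤ) :
    BP P m * BP P n + BP P (m + 1) * BP P (n + 1) =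
      (4 : ℝ) • ((Q (m + n + 4) : ℝ) • (1 : ℂ ⊗[ℝ] ℂ) - (Q (m + n + 4) : ℝ) • bi -
        (P (m + n + 4) : ℝ) • bj + (P (m + n + 4) : ℝ) • bij) := by
  have pk : ∀ a b : ℤ, (P a : ℝ) * P b + P (a+1) * P (b+1) = P (a+b+1) := fun a b => by
    exact_mod_cast keyP P hP hP0 hP1 a b
  have pP : ∀ a : ℤ, (P (a+2) : ℝ) = 2 * P (a+1) + P a := fun a => by exact_mod_cast hP a
  have pq : (Q (m+n+4) : ℝ) = P (m+n+3) + P (m+n+5) := by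
    have := keyQ P Q hP hP0 hP1 hQ hQ0 hQ1 (m+n+3)
    rw [show m+n+3+1 = m+n+4 by ring, show m+n+3+2 = m+n+5 by ring] at this
    exact_mod_cast this
  rw [BP, BP, BP, BP]
  simp only [add_mul, mul_add, smul_mul_smul_comm, hii, hjj, hkk, hij, hji, hik, hki, hjk,
    hkj, one_mul, mul_one, smul_neg]
  match_scalars
  · linear_combination (norm := ring_nf) pk m n - pk (m+1) (n+1) - pk (m+2) (n+2)
      + pk (m+3) (n+3) - 4*pq - pP (m+n+1) + 2*pP (m+n+2) + 2*pP (m+n+4) + pP (m+n+5)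
  · linear_combination (norm := ring_nf) pk m (n+1) + pk (m+1) n - pk (m+2) (n+3)
      - pk (m+3) (n+2) + 4*pq - 2*pP (m+n+2) - 2*pP (m+n+4)
  · linear_combination (norm := ring_nf) pk m (n+2) + pk (m+2) n - pk (m+1) (n+3)
      - pk (m+3) (n+1) - 2*pP (m+n+3)
  · linear_combination (norm := ring_nf) pk m (n+3) + pk (m+3) n + pk (m+1) (n+2)
      + pk (m+2) (n+1)
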